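/- Let n ≥ 1, and consider the label set L = {+1,−1,+2,−2,…,+n,−n} with negation as involution. Let F be the set of labellings (multisets over L) containing a complementary pair {+j,−j} for some j. Define M^0 to be the set of all 1-element labellings, and recursively for i = 1,…,n: partition M^{i−1} into M^{i−1}_+ ⊔ M^{i−1}_− by declaring ℓ ∈ M^{i−1}_+ iff the element of ℓ of least absolute value is positive (this is well-defined since ℓ contains no complementary pair); then let M^i be the set of multisets ℓ of size i+1 containing no complementary pair such that an odd number of the i+1 one-element deletions of ℓ yield a labelling in M^{i−1}_+. Then for every 0 ≤ i ≤ n−1: M^i_+ = {{k_1, −k_2, k_3, …, (−1)^i k_{i+1}} : 1 ≤ k_1 < k_2 < … < k_{i+1} ≤ n}, M^i_− = {{−k_1, k_2, −k_3, …, (−1)^{i+1} k_{i+1}} : 1 ≤ k_1 < … < k_{i+1} ≤ n}, and consequently M^n = ∅. -/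

import Mathlib

open scoped Classical

noncomputable section

/-- The multiset `m` consists of labels from `{±1, …, ±n} ⊆ ℤ`. -/
def overL (n : ℕ) (m : Multiset ℤ) : Prop := ∀ x ∈ m, 1 ≤ |x| ∧ |x| ≤ (n : ℤ)

/-- The multiset `m` contains a complementary pair `{+j, −j}`. -/
def hasCompl (m : Multiset ℤ) : Prop := ∃ j : ℤ, j ∈ m ∧ -j ∈ m

/-- The element of `m` of least absolute value is positive.  (For a multiset with no
complementary pair this singles out one of `m`, `−m`.) -/
def posMin (m : Multiset ℤ) : Prop := ∃ x ∈ m, 0 < x ∧ ∀ y ∈ m, |x| ≤ |y|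

/-- The sets `Mⁱ` of Ky Fan's parity proof of Tucker's lemma: `M 0` is the set of all
`1`-element labellings; `M (i+1)` is the set of complementary-pair-free labellings of
size `i + 2` an odd number of whose one-element deletions lie in the positive half
`Mⁱ₊ = {m ∈ Mⁱ | posMin m}`. -/
def M (n : ℕ) : ℕ → Set (Multiset ℤ)
  | 0 => {m | Multiset.card m = 1 ∧ overL n m}
  | (i + 1) => {m | Multiset.card m = i + 2 ∧ overL n m ∧ ¬hasCompl m ∧
      Odd (Multiset.card ((m.map (fun a => m.erase a)).filter
        (fun t => t ∈ M n i ∧ posMin t)))}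

/-- The positive half `Mⁱ₊` of the partition of `Mⁱ`. -/
def Mp (n i : ℕ) : Set (Multiset ℤ) := {m | m ∈ M n i ∧ posMin m}

/-- The alternating labellings `{k₁, −k₂, k₃, …, (−1)ⁱ k_{i+1}}` with
`1 ≤ k₁ < … < k_{i+1} ≤ n`; `ε = 0` gives the `+` version, `ε = 1` the `−` version. -/
def alt (n i ε : ℕ) : Set (Multiset ℤ) :=
  {m | ∃ k : Fin (i + 1) → ℤ, StrictMono k ∧ (∀ j, 1 ≤ k j ∧ k j ≤ (n : ℤ)) ∧
    m = ↑(List.ofFn fun j : Fin (i + 1) => (-1 : ℤ) ^ ((j : ℕ) + ε) * k j)}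

/-- In Ky Fan's parity proof of Tucker's lemma (label set
`{±1, …, ±n}`, forbidden labellings those with a complementary pair, partition rule
"the element of least absolute value is positive"), for every `0 ≤ i ≤ n − 1` the
positive half `Mⁱ₊` consists exactly of the alternating labellings
`{k₁, −k₂, …, (−1)ⁱ k_{i+1}}`, the negative half `Mⁱ₋ = Mⁱ \ Mⁱ₊` of the labellings
`{−k₁, k₂, …, (−1)^{i+1} k_{i+1}}` (with `1 ≤ k₁ < … < k_{i+1} ≤ n`), and
consequently `Mⁿ = ∅`. -/
lemma aux_sign_abs {e k : ℤ} (he : e = 1 ∨ e = -1) (hk : 1 ≤ k) : |e * k| = k := by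
  rcases he with h | h <;> subst h <;> simp [abs_of_pos (by omega : (0:ℤ) < k)]

lemma aux_neg_one_pow (a : ℕ) : ((-1:ℤ)^a = 1 ∨ (-1:ℤ)^a = -1) := by
  rcases Nat.even_or_odd a with h | h
  · exact Or.inl h.neg_one_pow
  · exact Or.inr h.neg_one_pow

lemma strictMono_ofFn_eq {c : ℕ} {k k' : Fin c → ℤ} (hk : StrictMono k) (hk' : StrictMono k')
    (h : (↑(List.ofFn k) : Multiset ℤ) = ↑(List.ofFn k')) : k = k' := by
  apply List.ofFn_injective
  exact List.Perm.eq_of_sortedLE (List.sortedLT_ofFn_iff.mpr hk).sortedLE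
    (List.sortedLT_ofFn_iff.mpr hk').sortedLE (Multiset.coe_eq_coe.mp h)

lemma rep_unique {c : ℕ} {k k' e e' : Fin c → ℤ} (hk : StrictMono k) (hk' : StrictMono k')
    (hk1 : ∀ j, 1 ≤ k j) (hk1' : ∀ j, 1 ≤ k' j)
    (he : ∀ j, e j = 1 ∨ e j = -1) (he' : ∀ j, e' j = 1 ∨ e' j = -1)
    (h : (↑(List.ofFn fun j => e j * k j) : Multiset ℤ) = ↑(List.ofFn fun j => e' j * k' j)) :
    k = k' ∧ e = e' := by
  have habs : k = k' := by
    apply strictMono_ofFn_eq hk hk'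
    have := congrArg (Multiset.map (fun x : ℤ => |x|)) h
    rw [Multiset.map_coe, Multiset.map_coe, List.map_ofFn, List.map_ofFn] at this
    simpa [Function.comp_def, aux_sign_abs (he _) (hk1 _), aux_sign_abs (he' _) (hk1' _)] using this
  subst habs
  refine ⟨rfl, funext fun j => ?_⟩
  have hmem : e j * k j ∈ (↑(List.ofFn fun j => e' j * k j) : Multiset ℤ) := by
    rw [← h]; exact Multiset.mem_coe.mpr (List.mem_ofFn.mpr ⟨j, rfl⟩)
  obtain ⟨l, hl⟩ := List.mem_ofFn.mp (Multiset.mem_coe.mp hmem)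
  have : k l = k j := by
    have := congrArg (fun x : ℤ => |x|) hl
    simpa [aux_sign_abs (he j) (hk1 j), aux_sign_abs (he' l) (hk1 l)] using this
  have hlj : l = j := hk.injective this
  subst hlj
  have hkj : (0:ℤ) < k l := by linarith [hk1 l]
  exact (mul_right_cancel₀ (ne_of_gt hkj) hl).symm


lemma mem_alt_iff {n i ε : ℕ} {k e : Fin (i + 1) → ℤ} (hk : StrictMono k)
    (hb : ∀ j, 1 ≤ k j ∧ k j ≤ (n : ℤ)) (he : ∀ j, e j = 1 ∨ e j = -1) :
    (↑(List.ofFn fun j => e j * k j) : Multiset ℤ) ∈ alt n i ε ↔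
      ∀ j, e j = (-1 : ℤ) ^ ((j : ℕ) + ε) := by
  constructor
  · rintro ⟨k', hk', hb', hm⟩
    obtain ⟨h1, h2⟩ := rep_unique hk hk' (fun j => (hb j).1) (fun j => (hb' j).1) he
      (fun j => aux_neg_one_pow _) hm
    intro j; exact congrFun h2 j
  · intro h
    exact ⟨k, hk, hb, by simp only [h]⟩

lemma alt_mem_card {n i ε : ℕ} {m : Multiset ℤ} (h : m ∈ alt n i ε) :
    Multiset.card m = i + 1 := by
  obtain ⟨k, hk, hb, rfl⟩ := h
  simp

lemma alt_mem_overL {n i ε : ℕ} {m : Multiset ℤ} (h : m ∈ alt n i ε) : overL n m := by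
  obtain ⟨k, hk, hb, rfl⟩ := h
  intro x hx
  obtain ⟨j, rfl⟩ := List.mem_ofFn.mp (Multiset.mem_coe.mp hx)
  rw [aux_sign_abs (aux_neg_one_pow _) (hb j).1]
  exact hb j

lemma alt_mem_not_hasCompl {n i ε : ℕ} {m : Multiset ℤ} (h : m ∈ alt n i ε) : ¬ hasCompl m := by
  obtain ⟨k, hk, hb, rfl⟩ := h
  rintro ⟨x, hx, hnx⟩
  obtain ⟨j, hj⟩ := List.mem_ofFn.mp (Multiset.mem_coe.mp hx)
  obtain ⟨l, hl⟩ := List.mem_ofFn.mp (Multiset.mem_coe.mp hnx)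
  have hjx : |x| = k j := by rw [← hj]; exact aux_sign_abs (aux_neg_one_pow _) (hb j).1
  have hlx : |x| = k l := by
    rw [show |x| = |-x| from (abs_neg x).symm, ← hl]
    exact aux_sign_abs (aux_neg_one_pow _) (hb l).1
  have : j = l := hk.injective (hjx ▸ hlx)
  subst this
  have hxx : x = -x := by rw [← hj] at hl ⊢; omega
  have hx0 : x = 0 := by omega
  rw [hx0] at hjx
  have := (hb j).1
  simp at hjx; omega

lemma alt_mem_nodup {n i ε : ℕ} {m : Multiset ℤ} (h : m ∈ alt n i ε) : m.Nodup := by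
  obtain ⟨k, hk, hb, rfl⟩ := h
  rw [Multiset.coe_nodup, List.nodup_ofFn]
  intro a b hab
  by_contra hne
  have : k a ≠ k b := fun hh => hne (hk.injective hh)
  apply this
  have := congrArg (fun x : ℤ => |x|) hab
  simpa [aux_sign_abs (aux_neg_one_pow _) (hb a).1, aux_sign_abs (aux_neg_one_pow _) (hb b).1]
    using this

lemma alt_posMin {n i : ℕ} {m : Multiset ℤ} (h : m ∈ alt n i 0) : posMin m := by
  obtain ⟨k, hk, hb, rfl⟩ := h
  refine ⟨k 0, ?_, by linarith [(hb 0).1], ?_⟩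
  · refine Multiset.mem_coe.mpr (List.mem_ofFn.mpr ⟨0, by simp⟩)
  · intro y hy
    obtain ⟨j, rfl⟩ := List.mem_ofFn.mp (Multiset.mem_coe.mp hy)
    rw [aux_sign_abs (aux_neg_one_pow _) (hb j).1, abs_of_pos (by linarith [(hb 0).1])]
    exact hk.monotone (Fin.zero_le j)

lemma alt_not_posMin {n i : ℕ} {m : Multiset ℤ} (h : m ∈ alt n i 1) : ¬ posMin m := by
  obtain ⟨k, hk, hb, rfl⟩ := h
  rintro ⟨x, hx, hx0, hmin⟩
  obtain ⟨j, rfl⟩ := List.mem_ofFn.mp (Multiset.mem_coe.mp hx)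
  have h0 : (-1:ℤ) ^ ((0:Fin (i+1)) : ℕ).succ * k 0 ∈ (↑(List.ofFn fun j : Fin (i + 1) => (-1 : ℤ) ^ ((j : ℕ) + 1) * k j) : Multiset ℤ) := by
    exact Multiset.mem_coe.mpr (List.mem_ofFn.mpr ⟨0, rfl⟩)
  have hle := hmin _ h0
  rw [aux_sign_abs (aux_neg_one_pow _) (hb j).1] at hle
  rw [aux_sign_abs (aux_neg_one_pow _) (hb 0).1] at hle
  have hj0 : j = 0 := le_antisymm (by
    by_contra hne
    have : (0 : Fin (i+1)) < j := lt_of_le_of_ne (Fin.zero_le j) (fun hh => hne (le_of_eq hh.symm))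
    exact absurd hle (not_le.mpr (hk this))) (Fin.zero_le j)
  subst hj0
  simp at hx0
  linarith [(hb 0).1]

def rOrd (a b : ℤ) : Prop := |a| < |b| ∨ (|a| = |b| ∧ a ≤ b)

instance : DecidableRel rOrd := fun a b => inferInstanceAs (Decidable (_ ∨ _))
instance : IsTrans ℤ rOrd := ⟨by
  intro a b c hab hbc
  rcases hab with h | ⟨h1, h2⟩ <;> rcases hbc with h' | ⟨h1', h2'⟩ <;> unfold rOrd <;> omega⟩
instance : IsAntisymm ℤ rOrd := ⟨by
  intro a b hab hba
  rcases hab with h | ⟨h1, h2⟩ <;> rcases hba with h' | ⟨h1', h2'⟩ <;> omega⟩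
instance : IsTotal ℤ rOrd := ⟨by
  intro a b; unfold rOrd
  rcases abs_cases a with ⟨h1, h2⟩ | ⟨h1, h2⟩ <;> rcases abs_cases b with ⟨h1', h2'⟩ | ⟨h1', h2'⟩ <;> omega⟩

lemma exists_rep {n c : ℕ} {m : Multiset ℤ} (hL : overL n m) (hnd : m.Nodup)
    (hcp : ¬ hasCompl m) (hcard : Multiset.card m = c) :
    ∃ k e : Fin c → ℤ, StrictMono k ∧ (∀ j, 1 ≤ k j ∧ k j ≤ (n : ℤ)) ∧
      (∀ j, e j = 1 ∨ e j = -1) ∧ m = ↑(List.ofFn fun j => e j * k j) := by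
  set l := Multiset.sort m rOrd with hl
  have hsorted : List.Pairwise rOrd l := Multiset.pairwise_sort m rOrd
  have hml : (↑l : Multiset ℤ) = m := Multiset.sort_eq m rOrd
  have hlen : l.length = c := by rw [← hcard, ← hml]; rfl
  have hmem : ∀ j : Fin l.length, l.get j ∈ m := fun j => by
    rw [← hml]; exact Multiset.mem_coe.mpr (List.get_mem l j)
  have hlnd : l.Nodup := by rw [← Multiset.coe_nodup, hml]; exact hnd
  refine ⟨fun j => |l.get (Fin.cast hlen.symm j)|,
          fun j => if 0 < l.get (Fin.cast hlen.symm j) then 1 else -1, ?_, ?_, ?_, ?_⟩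
  · intro a b hab
    have hget : rOrd (l.get (Fin.cast hlen.symm a)) (l.get (Fin.cast hlen.symm b)) := by
      apply List.Pairwise.rel_get_of_lt hsorted
      exact hab
    rcases hget with h | ⟨h1, h2⟩
    · exact h
    · exfalso
      set x := l.get (Fin.cast hlen.symm a)
      set y := l.get (Fin.cast hlen.symm b)
      have hxy : x ≠ y := by
        intro hxx
        have h3 := (List.Nodup.get_inj_iff hlnd).mp hxx
        have h4 := congrArg Fin.val h3
        simp only [Fin.coe_cast] at h4
        have h5 := Fin.lt_iff_val_lt_val.mp hab
        omega
      have : x = -y := by rcases abs_cases x with ⟨c1,c2⟩|⟨c1,c2⟩ <;> rcases abs_cases y with ⟨d1,d2⟩|⟨d1,d2⟩ <;> omega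
      exact hcp ⟨x, hmem _, by rw [this, neg_neg]; exact hmem (Fin.cast hlen.symm b)⟩
  · intro j; exact hL _ (hmem _)
  · intro j; dsimp only; split <;> simp
  · rw [← hml]
    congr 1
    symm
    apply List.ext_getElem
    · simp [hlen]
    · intro v h1 h2
      simp only [List.getElem_ofFn]
      have hvl : v < l.length := by simpa [hlen] using h1
      have hx := hL _ (hmem ⟨v, hvl⟩)
      have hgg : l.get (Fin.cast hlen.symm ⟨v, by simpa [hlen] using h1⟩) = l[v] := rfl
      rw [hgg]
      have hgg2 : l.get ⟨v, hvl⟩ = l[v] := rfl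
      rw [hgg2] at hx
      set x := l[v]
      split <;> rcases abs_cases x with ⟨c1,c2⟩|⟨c1,c2⟩ <;> omega

lemma parity_lemma {c : ℕ} (t : Fin (c + 1) → Prop) [DecidablePred t] :
    (Odd (Finset.univ.filter
        (fun j : Fin (c+1) => (∀ l, l < j → t l) ∧ (∀ l, j < l → ¬ t l))).card ↔
      ((∀ l, t l) ∨ (∀ l, ¬ t l))) := by
  by_cases h1 : ∀ l, t l
  · have : (Finset.univ.filter
        (fun j : Fin (c+1) => (∀ l, l < j → t l) ∧ (∀ l, j < l → ¬ t l))) = {Fin.last c} := by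
      ext j
      simp only [Finset.mem_filter, Finset.mem_univ, true_and, Finset.mem_singleton]
      constructor
      · rintro ⟨-, h2⟩
        by_contra hne
        exact h2 (Fin.last c) (lt_of_le_of_ne (Fin.le_last j) hne) (h1 _)
      · rintro rfl
        exact ⟨fun l _ => h1 l, fun l hl => absurd hl (not_lt.mpr (Fin.le_last l))⟩
    rw [this]
    simp [h1]
  · by_cases h2 : ∀ l, ¬ t l
    · have : (Finset.univ.filter
          (fun j : Fin (c+1) => (∀ l, l < j → t l) ∧ (∀ l, j < l → ¬ t l))) = {0} := by
        ext j
        simp only [Finset.mem_filter, Finset.mem_univ, true_and, Finset.mem_singleton]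
        constructor
        · rintro ⟨h3, -⟩
          by_contra hne
          exact h2 _ (h3 0 (lt_of_le_of_ne (Fin.zero_le j) (Ne.symm hne)))
        · rintro rfl
          exact ⟨fun l hl => absurd hl (not_lt.mpr (Fin.zero_le l)), fun l _ => h2 l⟩
      rw [this]
      simp [h2]
    · constructor
      · intro hodd
        exfalso
        push_neg at h2
        obtain ⟨b, hb⟩ := h2
        by_cases h3 : ∃ a b, a < b ∧ ¬ t a ∧ t b
        · obtain ⟨a, b', hab, hta, htb⟩ := h3
          have : (Finset.univ.filter
              (fun j : Fin (c+1) => (∀ l, l < j → t l) ∧ (∀ l, j < l → ¬ t l))) = ∅ := by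
            ext j
            simp only [Finset.mem_filter, Finset.mem_univ, true_and, Finset.notMem_empty,
              iff_false, not_and]
            intro hj1 hj2
            have hja : ¬ a < j := fun hh => hta (hj1 a hh)
            have hjb : ¬ j < b' := fun hh => hj2 b' hh htb
            push_neg at hja hjb
            exact absurd (lt_of_lt_of_le hab hjb) (not_lt.mpr hja)
          rw [this] at hodd
          simp at hodd
        · push_neg at h1
          have hne : (Finset.univ.filter (fun x : Fin (c+1) => ¬ t x)).Nonempty := by
            obtain ⟨a, ha⟩ := h1
            exact ⟨a, by simp [ha]⟩
          set a0 := (Finset.univ.filter (fun x : Fin (c+1) => ¬ t x)).min' hne with ha0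
          have hta0 : ¬ t a0 := by
            have := Finset.min'_mem _ hne
            simp only [Finset.mem_filter] at this
            exact this.2
          have hmin : ∀ x, ¬ t x → a0 ≤ x := fun x hx =>
            Finset.min'_le _ _ (by simp [hx])
          push_neg at h3
          have hchar : ∀ l, t l ↔ l < a0 := by
            intro l
            constructor
            · intro htl
              by_contra hge
              push_neg at hge
              have : a0 ≠ l := fun hh => hta0 (hh ▸ htl)
              exact h3 a0 l (lt_of_le_of_ne hge this) hta0 htl
            · intro hl
              by_contra htl
              exact absurd hl (not_lt.mpr (hmin l htl))
          have ha0pos : (0 : Fin (c+1)) < a0 := by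
            apply Fin.pos_iff_ne_zero.mpr
            intro hh
            exact absurd ((hchar b).mp hb) (by rw [hh]; exact not_lt.mpr (Fin.zero_le b))
          obtain ⟨v, hv⟩ : ∃ v : ℕ, (a0 : ℕ) = v + 1 :=
            ⟨(a0 : ℕ) - 1, by have := Fin.lt_iff_val_lt_val.mp ha0pos; omega⟩
          set a1 : Fin (c+1) := ⟨v, by have := a0.isLt; omega⟩ with ha1
          have ha1lt : a1 < a0 := by rw [Fin.lt_iff_val_lt_val]; simp only [ha1, hv]; omega
          have : (Finset.univ.filter
              (fun j : Fin (c+1) => (∀ l, l < j → t l) ∧ (∀ l, j < l → ¬ t l))) = {a1, a0} := by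
            ext j
            simp only [Finset.mem_filter, Finset.mem_univ, true_and, Finset.mem_insert,
              Finset.mem_singleton]
            constructor
            · rintro ⟨hj1, hj2⟩
              have hja : j ≤ a0 := by
                by_contra hh
                push_neg at hh
                exact hta0 (hj1 a0 hh)
              have hjb : a1 ≤ j := by
                by_contra hh
                push_neg at hh
                exact hj2 a1 hh ((hchar a1).mpr ha1lt)
              have h5 := Fin.le_iff_val_le_val.mp hja
              have h6 := Fin.le_iff_val_le_val.mp hjb
              have : (j : ℕ) = v ∨ (j : ℕ) = (a0 : ℕ) := by simp [ha1] at h6 ⊢; omega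
              rcases this with h | h
              · left; exact Fin.ext (by simp [ha1, h])
              · right; exact Fin.ext h
            · rintro (rfl | rfl)
              · refine ⟨fun l hl => (hchar l).mpr (lt_trans hl ha1lt), fun l hl => ?_⟩
                rw [hchar]
                push_neg
                rw [Fin.le_iff_val_le_val]
                have := Fin.lt_iff_val_lt_val.mp hl
                simp [ha1] at this ⊢
                omega
              · exact ⟨fun l hl => (hchar l).mpr hl, fun l hl htl =>
                  absurd ((hchar l).mp htl) (not_lt.mpr (le_of_lt hl))⟩
          rw [this] at hodd
          rw [Finset.card_insert_of_notMem (by simp [Finset.mem_singleton, ne_of_lt ha1lt]),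
            Finset.card_singleton] at hodd
          simp [Nat.odd_iff] at hodd
      · intro h
        rcases h with h | h
        · exact absurd h h1
        · exact absurd h h2



lemma strictMono_fin_bound {c : ℕ} {k : Fin (c+1) → ℤ} (hk : StrictMono k) (j : Fin (c+1)) :
    k 0 + (j : ℕ) ≤ k j := by
  obtain ⟨v, hv⟩ := j
  induction v with
  | zero => simp
  | succ w ih =>
    have hw : w < c + 1 := by omega
    have h1 := ih hw
    have h2 : k ⟨w, hw⟩ < k ⟨w+1, hv⟩ := hk (Fin.mk_lt_mk.mpr (by omega))
    simp only [Fin.val_mk] at h1 ⊢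
    push_cast at h1 ⊢
    omega

lemma even_count_of_not_nodup {n i : ℕ} (halt : ∀ t ∈ Mp n i, Multiset.Nodup t)
    {m : Multiset ℤ} (hnd : ¬ m.Nodup) :
    ¬ Odd (Multiset.card ((m.map (fun a => m.erase a)).filter
        (fun t => t ∈ M n i ∧ posMin t))) := by
  rw [Nat.not_odd_iff_even, ← Multiset.countP_eq_card_filter, Multiset.countP_map]
  set q : ℤ → Prop := fun a => m.erase a ∈ M n i ∧ posMin (m.erase a) with hq
  have key : ∀ a, q a → Multiset.count a m = 2 := by
    intro a hqa
    have hnda : (m.erase a).Nodup := halt _ hqa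
    obtain ⟨y, hy⟩ : ∃ y, 2 ≤ Multiset.count y m := by
      by_contra hno; push_neg at hno
      exact hnd (Multiset.nodup_iff_count_le_one.mpr (fun x => by have := hno x; omega))
    have hya : y = a := by
      by_contra hne
      have h1 := Multiset.nodup_iff_count_le_one.mp hnda y
      rw [Multiset.count_erase_of_ne hne] at h1
      omega
    subst hya
    have h1 := Multiset.nodup_iff_count_le_one.mp hnda y
    rw [Multiset.count_erase_self] at h1
    omega
  rw [← Multiset.toFinset_sum_count_eq]
  refine even_iff_two_dvd.mpr (Finset.dvd_sum ?_)
  intro a ha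
  rw [Multiset.mem_toFinset, Multiset.mem_filter] at ha
  rw [Multiset.count_filter, if_pos ha.2, key a ha.2]

lemma erase_ofFn_eq {c : ℕ} {f : Fin (c+1) → ℤ} (j : Fin (c+1)) :
    (↑(List.ofFn f) : Multiset ℤ).erase (f j) = ↑(List.ofFn (f ∘ j.succAbove)) := by
  have h1 : (↑(List.ofFn f) : Multiset ℤ) = Multiset.map f Finset.univ.val := by
    rw [Fin.univ_val_map]
  rw [h1, Fin.univ_succAbove c j]
  rw [Finset.cons_val, Multiset.map_cons, Multiset.erase_cons_head, Finset.map_val,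
    Multiset.map_map]
  rw [show (f ∘ ⇑(j.succAboveEmb) : Fin c → ℤ) = f ∘ j.succAbove from rfl]
  exact Fin.univ_val_map _

lemma count_eq {n i : ℕ} (IH : Mp n i = alt n i 0) {k e : Fin (i+2) → ℤ}
    (hk : StrictMono k) (hb : ∀ j, 1 ≤ k j ∧ k j ≤ (n:ℤ)) (he : ∀ j, e j = 1 ∨ e j = -1) :
    Multiset.card (((↑(List.ofFn fun j => e j * k j) : Multiset ℤ).map
        (fun a => (↑(List.ofFn fun j => e j * k j) : Multiset ℤ).erase a)).filter
        (fun t => t ∈ M n i ∧ posMin t))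
      = (Finset.univ.filter (fun j : Fin (i+2) =>
          (∀ l, l < j → e l = (-1:ℤ)^(l:ℕ)) ∧ (∀ l, j < l → ¬ e l = (-1:ℤ)^(l:ℕ)))).card := by
  set f : Fin (i+2) → ℤ := fun j => e j * k j with hf
  set m : Multiset ℤ := ↑(List.ofFn f) with hm
  have key : ∀ j : Fin (i+2), ((m.erase (f j) ∈ M n i ∧ posMin (m.erase (f j))) ↔
      ((∀ l, l < j → e l = (-1:ℤ)^(l:ℕ)) ∧ (∀ l, j < l → ¬ e l = (-1:ℤ)^(l:ℕ)))) := by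
    intro j
    have h1 : m.erase (f j) = ↑(List.ofFn fun l => e (j.succAbove l) * k (j.succAbove l)) := by
      rw [hm, erase_ofFn_eq j]; rfl
    have h2 : (m.erase (f j) ∈ M n i ∧ posMin (m.erase (f j))) ↔ m.erase (f j) ∈ Mp n i :=
      Iff.rfl
    rw [h2, IH, h1]
    refine Iff.trans (mem_alt_iff (k := fun l => k (j.succAbove l))
      (e := fun l => e (j.succAbove l))
      (fun a b hab => hk (Fin.strictMono_succAbove j hab))
      (fun l => hb _) (fun l => he _)) ?_
    constructor
    · intro h
      constructor
      · intro l' hl'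
        have hjv := Fin.lt_iff_val_lt_val.mp hl'
        have hv : (l' : ℕ) < i + 1 := by have := j.isLt; omega
        have hsa : j.succAbove ⟨(l' : ℕ), hv⟩ = l' := by
          rw [Fin.succAbove_of_castSucc_lt j _ (by
            rw [Fin.lt_iff_val_lt_val]; simpa using hjv)]
          exact Fin.ext (by simp)
        have := h ⟨(l' : ℕ), hv⟩
        simp only [hsa, Fin.val_mk, add_zero] at this
        exact this
      · intro l' hl'
        have hjv := Fin.lt_iff_val_lt_val.mp hl'
        have hv1 : 1 ≤ (l' : ℕ) := by omega
        have hv : (l' : ℕ) - 1 < i + 1 := by have := l'.isLt; omega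
        have hsa : j.succAbove ⟨(l' : ℕ) - 1, hv⟩ = l' := by
          rw [Fin.succAbove_of_le_castSucc j _ (by
            rw [Fin.le_iff_val_le_val]; simp; omega)]
          exact Fin.ext (by simp; omega)
        have h3 := h ⟨(l' : ℕ) - 1, hv⟩
        simp only [hsa, Fin.val_mk, add_zero] at h3
        intro h4
        have h5 : ((l' : ℕ) - 1) + 1 = (l' : ℕ) := by omega
        have h6 : (-1:ℤ)^((l' : ℕ)) = -(-1:ℤ)^((l' : ℕ) - 1) := by
          conv_lhs => rw [← h5]
          rw [pow_succ]; ring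
        rcases aux_neg_one_pow ((l' : ℕ) - 1) with h7 | h7 <;> rw [h4, h6, h7] at h3 <;> omega
    · rintro ⟨h1', h2'⟩ l
      simp only [add_zero]
      by_cases hc : Fin.castSucc l < j
      · rw [Fin.succAbove_of_castSucc_lt j l hc]
        have := h1' (Fin.castSucc l) hc
        simpa using this
      · push_neg at hc
        rw [Fin.succAbove_of_le_castSucc j l hc]
        have hlt : j < Fin.succ l := by
          rw [Fin.lt_iff_val_lt_val]
          have := Fin.le_iff_val_le_val.mp hc
          simp at this ⊢
          omega
        have h3 := h2' (Fin.succ l) hlt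
        have h4 : (-1:ℤ)^((Fin.succ l : ℕ)) = -(-1:ℤ)^((l : ℕ)) := by
          simp [pow_succ]
        rcases he (Fin.succ l) with h5 | h5 <;>
          rcases aux_neg_one_pow ((l : ℕ)) with h6 | h6 <;>
          rw [h5] at h3 ⊢ <;> rw [h4, h6] at h3 <;> rw [h6] <;> omega
  -- now the card computation
  have hmap : m.map (fun a => m.erase a) = Multiset.map ((fun a => m.erase a) ∘ f)
      Finset.univ.val := by
    rw [show m.map (fun a => m.erase a)
        = (Multiset.map f Finset.univ.val).map (fun a => m.erase a) from by
      rw [Fin.univ_val_map]]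
    rw [Multiset.map_map]
  rw [hmap, ← Multiset.countP_eq_card_filter, Multiset.countP_map]
  rw [Finset.card_def, Finset.filter_val]
  congr 1
  apply Multiset.filter_congr
  intro j _
  exact key j

lemma half_of_union {n i : ℕ} (hM : M n i = alt n i 0 ∪ alt n i 1) :
    Mp n i = alt n i 0 ∧ M n i \ Mp n i = alt n i 1 := by
  constructor
  · ext m
    constructor
    · rintro ⟨hm, hp⟩
      rw [hM] at hm
      rcases hm with h | h
      · exact h
      · exact absurd hp (alt_not_posMin h)
    · intro h
      exact ⟨hM ▸ Or.inl h, alt_posMin h⟩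
  · ext m
    constructor
    · rintro ⟨hm, hnp⟩
      have hm' := hm
      rw [hM] at hm'
      rcases hm' with h | h
      · exact absurd ⟨hm, alt_posMin h⟩ hnp
      · exact h
    · intro h
      refine ⟨hM ▸ Or.inr h, ?_⟩
      rintro ⟨-, hp⟩
      exact alt_not_posMin h hp

theorem fan_parity_characterization (n : ℕ) (hn : 1 ≤ n) :
    (∀ i ≤ n - 1,
      Mp n i = alt n i 0 ∧ M n i \ Mp n i = alt n i 1) ∧ M n n = ∅ := by
  have key : ∀ i, i ≤ n - 1 → M n i = alt n i 0 ∪ alt n i 1 := by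
    intro i
    induction i with
    | zero =>
      intro _
      ext m
      constructor
      · intro h
        obtain ⟨hcard, hL⟩ := h
        obtain ⟨x, rfl⟩ := Multiset.card_eq_one.mp hcard
        have hx := hL x (Multiset.mem_singleton_self x)
        have hx0 : x ≠ 0 := by intro hh; rw [hh] at hx; simp at hx
        have hsm : ∀ y : ℤ, StrictMono (fun _ : Fin 1 => y) := fun y =>
          Subsingleton.strictMono _
        rcases lt_or_gt_of_ne hx0 with hneg | hpos
        · right
          refine ⟨fun _ => -x, hsm _, fun j => ?_, ?_⟩
          · have hbx : 1 ≤ -x ∧ -x ≤ (n:ℤ) := by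
              rcases abs_cases x with ⟨c1,c2⟩|⟨c1,c2⟩ <;> omega
            exact hbx
          · rw [show (List.ofFn fun j : Fin 1 => (-1:ℤ)^((j:ℕ)+1) * (fun _ => -x) j)
              = [(-1:ℤ)^(0+1) * (-x)] from by rw [List.ofFn_succ, List.ofFn_zero]; rfl]
            simp
        · left
          refine ⟨fun _ => x, hsm _, fun j => ?_, ?_⟩
          · have hbx : 1 ≤ x ∧ x ≤ (n:ℤ) := by
              rcases abs_cases x with ⟨c1,c2⟩|⟨c1,c2⟩ <;> omega
            exact hbx
          · rw [show (List.ofFn fun j : Fin 1 => (-1:ℤ)^((j:ℕ)+0) * (fun _ => x) j)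
              = [(-1:ℤ)^(0+0) * x] from by rw [List.ofFn_succ, List.ofFn_zero]; rfl]
            simp
      · rintro (h | h) <;> exact ⟨alt_mem_card h, alt_mem_overL h⟩
    | succ i ih =>
      intro hle
      have IHM := ih (by omega)
      have IHp := (half_of_union IHM).1
      ext m
      constructor
      · intro h
        obtain ⟨hcard, hL, hcp, hodd⟩ := h
        have hnodup : m.Nodup := by
          by_contra hnd
          exact even_count_of_not_nodup
            (fun t ht => alt_mem_nodup (IHp ▸ ht)) hnd hodd
        obtain ⟨k, e, hk, hb, he, rfl⟩ := exists_rep hL hnodup hcp hcard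
        rw [count_eq IHp hk hb he] at hodd
        rw [parity_lemma (fun l : Fin (i+2) => e l = (-1:ℤ)^(l:ℕ))] at hodd
        rcases hodd with hall | hnone
        · left
          exact (mem_alt_iff hk hb he).mpr (fun j => by rw [add_zero]; exact hall j)
        · right
          refine (mem_alt_iff hk hb he).mpr (fun j => ?_)
          have h1 := hnone j
          have h2 : (-1:ℤ)^((j:ℕ)+1) = -(-1:ℤ)^((j:ℕ)) := by rw [pow_succ]; ring
          rcases he j with h3 | h3 <;> rcases aux_neg_one_pow ((j:ℕ)) with h4 | h4 <;>
            rw [h2, h4] <;> rw [h3] at h1 ⊢ <;> rw [h4] at h1 <;> omega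
      · have main : ∀ ε, ε = 0 ∨ ε = 1 → m ∈ alt n (i+1) ε →
            ((∀ l : Fin (i+2), ((-1:ℤ)^((l:ℕ)+ε) = (-1:ℤ)^(l:ℕ))) ∨
             (∀ l : Fin (i+2), ¬((-1:ℤ)^((l:ℕ)+ε) = (-1:ℤ)^(l:ℕ)))) → m ∈ M n (i+1) := by
          rintro ε hε ⟨k, hk, hb, rfl⟩ hpar
          have halt : (↑(List.ofFn fun j : Fin (i+2) => (-1:ℤ)^((j:ℕ)+ε) * k j) : Multiset ℤ)
              ∈ alt n (i+1) ε := ⟨k, hk, hb, rfl⟩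
          refine ⟨by simp, alt_mem_overL halt, alt_mem_not_hasCompl halt, ?_⟩
          rw [count_eq IHp hk hb (fun j => aux_neg_one_pow _)]
          rw [parity_lemma (fun l : Fin (i+2) => (-1:ℤ)^((l:ℕ)+ε) = (-1:ℤ)^(l:ℕ))]
          exact hpar
        rintro (h | h)
        · refine main 0 (Or.inl rfl) h (Or.inl (fun l => by rw [add_zero]))
        · refine main 1 (Or.inr rfl) h (Or.inr (fun l => ?_))
          rw [pow_succ]
          rcases aux_neg_one_pow ((l:ℕ)) with h4 | h4 <;> rw [h4] <;> omega
  constructor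
  · intro i hi
    exact half_of_union (key i hi)
  · obtain ⟨c, rfl⟩ : ∃ c, n = c + 1 := ⟨n - 1, by omega⟩
    ext m
    simp only [Set.mem_empty_iff_false, iff_false]
    intro h
    obtain ⟨hcard, hL, hcp, hodd⟩ := h
    have IHp := (half_of_union (key c (by omega))).1
    have hnodup : m.Nodup := by
      by_contra hnd
      exact even_count_of_not_nodup
        (fun t ht => alt_mem_nodup (IHp ▸ ht)) hnd hodd
    obtain ⟨k, e, hk, hb, he, rfl⟩ := exists_rep hL hnodup hcp hcard
    have h1 := strictMono_fin_bound hk (Fin.last (c+1))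
    have h2 := (hb (Fin.last (c+1))).2
    have h3 := (hb 0).1
    rw [Fin.val_last] at h1
    push_cast at h1 h2 h3
    omega

end
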